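/- Let f be holomorphic on an open set containing the closed disk D(z', 2r) with f(z') ≠ 0. Let n(r) be the number of zeros of f (with multiplicity) in the open disk D(z', r). Then n(r) ≤ (1/ln 2)·(ln max_{|z-z'|=2r} |f(z)| - ln |f(z')|). -/

import Mathlib

open Metric


lemma extract_factor' {f : ℂ → ℂ} {V : Set ℂ} (hV : IsOpen V)
    (hf : DifferentiableOn ℂ f V) (a : ℂ) (n : ℕ) (h : ℂ → ℂ)
    (hh : AnalyticAt ℂ h a) (heq : ∀ᶠ w in nhds a, f w = (w - a) ^ n * h w) :
    ∃ g : ℂ → ℂ, DifferentiableOn ℂ g V ∧ ∀ z, f z = (z - a) ^ n * g z := by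
  classical
  refine ⟨fun z => if z = a then h a else f z / (z - a) ^ n, ?_, ?_⟩
  · have hga : (fun z => if z = a then h a else f z / (z - a) ^ n) =ᶠ[nhds a] h := by
      filter_upwards [heq] with w hw
      by_cases hwa : w = a
      · simp [hwa]
      · have hne : (w - a) ^ n ≠ 0 := pow_ne_zero _ (sub_ne_zero.mpr hwa)
        simp only [if_neg hwa, hw]
        field_simp
    intro z hz
    by_cases hza : z = a
    · subst hza
      exact ((hh.congr hga.symm).differentiableAt).differentiableWithinAt
    · have hda : DifferentiableAt ℂ f z := hf.differentiableAt (hV.mem_nhds hz)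
      have hne : ∀ᶠ w in nhds z, w ≠ a := eventually_ne_nhds hza
      have : DifferentiableAt ℂ (fun w => f w / (w - a) ^ n) z :=
        hda.div (((differentiable_id.sub_const a).pow n) z)
          (pow_ne_zero _ (sub_ne_zero.mpr hza))
      refine (this.congr_of_eventuallyEq ?_).differentiableWithinAt
      filter_upwards [hne] with w hw
      simp [if_neg hw]
  · intro z
    by_cases hza : z = a
    · subst hza
      have := heq.self_of_nhds
      simpa using this
    · have hne : (z - a) ^ n ≠ 0 := pow_ne_zero _ (sub_ne_zero.mpr hza)
      simp only [if_neg hza]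
      field_simp

lemma factor_all (m : ℂ → ℕ) (Z : Finset ℂ) :
    ∀ {f : ℂ → ℂ} {V : Set ℂ}, IsOpen V → DifferentiableOn ℂ f V →
    (∀ z ∈ Z, ∃ h : ℂ → ℂ, AnalyticAt ℂ h z ∧
      ∀ᶠ w in nhds z, f w = (w - z) ^ (m z) * h w) →
    ∃ g : ℂ → ℂ, DifferentiableOn ℂ g V ∧
      ∀ z, f z = (∏ k ∈ Z, (z - k) ^ (m k)) * g z := by
  classical
  induction Z using Finset.induction with
  | empty =>
    intro f V hV hf _
    exact ⟨f, hf, fun z => by simp⟩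
  | @insert a s ha ih =>
    intro f V hV hf hmult
    obtain ⟨h, hh, heq⟩ := hmult a (Finset.mem_insert_self a s)
    obtain ⟨g1, hg1, hfac1⟩ := extract_factor' hV hf a (m a) h hh heq
    have hmult1 : ∀ z ∈ s, ∃ h' : ℂ → ℂ, AnalyticAt ℂ h' z ∧
        ∀ᶠ w in nhds z, g1 w = (w - z) ^ (m z) * h' w := by
      intro z hz
      obtain ⟨hz', hhz, heqz⟩ := hmult z (Finset.mem_insert_of_mem hz)
      have hza : z ≠ a := by rintro rfl; exact ha hz
      refine ⟨fun w => hz' w / (w - a) ^ (m a), ?_, ?_⟩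
      · exact hhz.div ((analyticAt_id.sub analyticAt_const).pow (m a))
          (pow_ne_zero _ (sub_ne_zero.mpr hza))
      · filter_upwards [heqz, eventually_ne_nhds hza] with w hw hwa
        have hne : (w - a) ^ (m a) ≠ 0 := pow_ne_zero _ (sub_ne_zero.mpr hwa)
        have h1 : (w - a) ^ (m a) * g1 w = (w - z) ^ (m z) * hz' w := by
          rw [← hfac1 w, hw]
        field_simp
        linear_combination h1
    obtain ⟨g, hg, hfac⟩ := ih hV hg1 hmult1
    refine ⟨g, hg, fun z => ?_⟩
    rw [Finset.prod_insert ha, hfac1 z, hfac z]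
    ring

theorem zero_count_le_of_jensen {f : ℂ → ℂ} {V : Set ℂ} (hV : IsOpen V)
    (z' : ℂ) (r : ℝ) (hr : 0 < r) (hball : closedBall z' (2 * r) ⊆ V)
    (hf : DifferentiableOn ℂ f V) (hfz' : f z' ≠ 0)
    (M : ℝ) (hM : ∀ z ∈ sphere z' (2 * r), ‖f z‖ ≤ M)
    (Z : Finset ℂ) (hZ : ↑Z ⊆ ball z' r) (m : ℂ → ℕ)
    (hmult : ∀ z ∈ Z, ∃ h : ℂ → ℂ, AnalyticAt ℂ h z ∧ h z ≠ 0 ∧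
      ∀ᶠ w in nhds z, f w = (w - z) ^ (m z) * h w) :
    (∑ z ∈ Z, (m z : ℝ)) ≤
      (Real.log M - Real.log (‖f z'‖)) / Real.log 2 := by
  classical
  set R : ℝ := 2 * r with hRdef
  have hR : 0 < R := by positivity
  set N : ℕ := ∑ z ∈ Z, m z with hNdef
  obtain ⟨g, hg, hfac⟩ := factor_all m Z hV hf (fun z hz => by
    obtain ⟨h, h1, _, h3⟩ := hmult z hz; exact ⟨h, h1, h3⟩)
  set P : ℂ → ℂ := fun z => ∏ k ∈ Z, (z - k) ^ (m k) with hPdef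
  set F : ℂ → ℂ := fun z =>
    g z * ∏ k ∈ Z, (((R : ℂ)) ^ 2 - (starRingEnd ℂ) (k - z') * (z - z')) ^ (m k) with hFdef
  -- F is differentiable on V
  have hFdiff : DifferentiableOn ℂ F V := by
    apply hg.mul
    apply Differentiable.differentiableOn
    apply Differentiable.fun_finsetProd
    intro k _
    exact ((differentiable_const _).sub
      ((differentiable_const _).mul (differentiable_id.sub_const z'))).pow _
  -- boundary bound
  have hbound : ∀ z ∈ frontier (ball z' R), ‖F z‖ ≤ M * R ^ N := by
    intro z hzf
    rw [frontier_ball z' hR.ne'] at hzf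
    have habs : ‖z - z'‖ = R := by
      simpa [Complex.dist_eq] using (mem_sphere_iff_norm.mp hzf)
    have hww : (z - z') * (starRingEnd ℂ) (z - z') = ((R : ℂ)) ^ 2 := by
      rw [Complex.mul_conj]
      rw [← Complex.sq_norm, habs]
      push_cast
      ring
    have key : ∀ k ∈ Z, ((R : ℂ)) ^ 2 - (starRingEnd ℂ) (k - z') * (z - z')
        = (z - z') * (starRingEnd ℂ) (z - k) := by
      intro k _
      have : (starRingEnd ℂ) (z - k) = (starRingEnd ℂ) (z - z') - (starRingEnd ℂ) (k - z') := by
        rw [← map_sub]; ring_nf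
      rw [this, ← hww]; ring
    have hFz : F z = g z * ((z - z') ^ N * (starRingEnd ℂ) (P z)) := by
      rw [hFdef]
      simp only
      congr 1
      rw [Finset.prod_congr rfl (fun k hk => by rw [key k hk])]
      rw [Finset.prod_congr rfl (fun k _ => mul_pow (z - z') ((starRingEnd ℂ) (z - k)) (m k)),
        Finset.prod_mul_distrib, Finset.prod_pow_eq_pow_sum, hPdef]
      congr 1
      rw [map_prod]
      exact Finset.prod_congr rfl (fun k _ => by rw [map_pow])
    have hfz : ‖f z‖ = ‖P z‖ * ‖g z‖ := by
      rw [hfac z, norm_mul]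
    have : ‖F z‖ = ‖f z‖ * R ^ N := by
      rw [hFz, norm_mul, norm_mul, norm_pow, Complex.norm_conj, habs, hfz]
      ring
    rw [this]
    have hMz : ‖f z‖ ≤ M := hM z hzf
    exact mul_le_mul_of_nonneg_right hMz (by positivity)
  -- maximum modulus
  have hsub : closedBall z' R ⊆ V := hball
  have hFz' : ‖F z'‖ ≤ M * R ^ N := by
    have hcl : closure (ball z' R) = closedBall z' R := closure_ball z' hR.ne'
    apply Complex.norm_le_of_forall_mem_frontier_norm_le isBounded_ball
      ⟨hFdiff.mono (ball_subset_closedBall.trans hsub), by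
        rw [hcl]; exact (hFdiff.mono hsub).continuousOn⟩ hbound
    rw [hcl]; exact mem_closedBall_self hR.le
  -- evaluate F at z'
  have hFval : ‖F z'‖ = ‖g z'‖ * (R ^ N) ^ 2 := by
    have : F z' = g z' * ((R : ℂ) ^ 2) ^ N := by
      rw [hFdef]
      simp only [sub_self, mul_zero, sub_zero]
      rw [Finset.prod_pow_eq_pow_sum]
    rw [this, norm_mul, norm_pow, norm_pow, Complex.norm_of_nonneg hR.le,
      ← pow_mul, ← pow_mul, Nat.mul_comm]
  have hgRN : ‖g z'‖ * (R ^ N) ^ 2 ≤ M * R ^ N := hFval ▸ hFz'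
  -- |P z'| ≤ r^N
  have hPle : ‖P z'‖ ≤ r ^ N := by
    rw [hPdef]
    simp only [norm_prod, norm_pow]
    calc (∏ k ∈ Z, ‖z' - k‖ ^ m k) ≤ ∏ k ∈ Z, r ^ m k := by
          apply Finset.prod_le_prod
          · intro k _; positivity
          · intro k hk
            apply pow_le_pow_left₀ (norm_nonneg _)
            have : dist k z' < r := mem_ball.mp (hZ hk)
            rw [Complex.dist_eq] at this
            have h' : ‖z' - k‖ < r := by rw [norm_sub_rev]; exact this
            exact h'.le
      _ = r ^ N := Finset.prod_pow_eq_pow_sum Z m r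
  -- key inequality: 2^N * |f z'| ≤ M
  have hfabs : ‖f z'‖ = ‖P z'‖ * ‖g z'‖ := by
    rw [hfac z', norm_mul]
  have hkey : (2 : ℝ) ^ N * ‖f z'‖ ≤ M := by
    have hA : (0 : ℝ) < R ^ N := by positivity
    have h2 : (2 : ℝ) ^ N * r ^ N = R ^ N := by rw [← mul_pow]
    have hgA : ‖g z'‖ * R ^ N ≤ M := by
      have := hgRN
      nlinarith [norm_nonneg (g z')]
    rw [hfabs]
    have hgnn : (0 : ℝ) ≤ ‖g z'‖ := norm_nonneg _
    calc (2:ℝ)^N * (‖P z'‖ * ‖g z'‖)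
        = ((2:ℝ)^N * ‖P z'‖) * ‖g z'‖ := by ring
      _ ≤ ((2:ℝ)^N * r^N) * ‖g z'‖ := by
          exact mul_le_mul_of_nonneg_right
            (mul_le_mul_of_nonneg_left hPle (by positivity)) hgnn
      _ = ‖g z'‖ * R^N := by rw [h2]; ring
      _ ≤ M := hgA
  -- conclude with logs
  have hfpos : 0 < ‖f z'‖ := norm_pos_iff.mpr hfz'
  have hlog : Real.log ((2 : ℝ) ^ N * ‖f z'‖) ≤ Real.log M :=
    Real.log_le_log (by positivity) hkey
  rw [Real.log_mul (by positivity) hfpos.ne', Real.log_pow] at hlog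
  rw [le_div_iff₀ (Real.log_pos one_lt_two)]
  have hcast : (∑ z ∈ Z, (m z : ℝ)) = (N : ℝ) := by rw [hNdef]; push_cast; ring
  rw [hcast]
  linarith
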